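/- Define the pseudo policy π_a(t|x) = [π_e(t|x)/π_b(t|x)] / Σ_{t'} [π_e(t'|x)/π_b(t'|x)]. If the pseudo action A is sampled from π_a(·|X) independently of (T, Y^0,...,Y^{m-1}) given X, then for each t, the posterior probability P(T = t | A = T, X) equals π_e(t|X). Consequently, the conditional law of Y given {A = T} and X equals Σ_t π_e(t|X) P_{Y^t|X} = P_{Y^{π_e}|X}. -/

import Mathlib

open MeasureTheory ProbabilityTheory

/-- With the pseudo policy `πa(t) = (πe t / πb t) / ∑ t', πe t' / πb t'` and pseudo action `A`
drawn from `πa` independently of `(T, Y^0, ..., Y^{m-1})` (all conditionally on `X = x`,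
encoded by the measure `μ`), the posterior satisfies `P(T = t | A = T) = πe t`, and the
conditional law of `Y` given `{A = T}` is `∑ t, πe t • P_{Y^t} = P_{Y^{πe}}`. -/
theorem stmt_2 {Ω : Type*} [MeasurableSpace Ω] (μ : Measure Ω) [IsProbabilityMeasure μ]
    (m : ℕ) (hm : 0 < m) (T A : Ω → Fin m) (Y : Ω → ℝ) (Ypot : Fin m → Ω → ℝ)
    (hT : Measurable T) (hA : Measurable A) (hY : Measurable Y)
    (hYpot : ∀ t, Measurable (Ypot t))
    -- consistency: Y = Y^T a.s.
    (hcons : ∀ᵐ ω ∂μ, Y ω = Ypot (T ω) ω)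
    -- unconfoundedness: (Y^0, ..., Y^{m-1}) ⟂ T
    (hTY : ∀ (t : Fin m) (S : Set (Fin m → ℝ)), MeasurableSet S →
      μ ({ω | T ω = t} ∩ {ω | (fun u => Ypot u ω) ∈ S})
        = μ {ω | T ω = t} * μ {ω | (fun u => Ypot u ω) ∈ S})
    -- A ⟂ (T, Y^0, ..., Y^{m-1})
    (hAindep : ∀ (a : Fin m) (Bset : Set (Fin m × (Fin m → ℝ))), MeasurableSet Bset →
      μ ({ω | A ω = a} ∩ {ω | (T ω, fun u => Ypot u ω) ∈ Bset})
        = μ {ω | A ω = a} * μ {ω | (T ω, fun u => Ypot u ω) ∈ Bset})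
    (πb πe : Fin m → ℝ)
    (hπb : ∀ t, (μ {ω | T ω = t}).toReal = πb t)
    (hpos : ∀ t, 0 < πb t)
    (hπe0 : ∀ t, 0 ≤ πe t) (hπe1 : ∑ t, πe t = 1)
    -- A is sampled from the pseudo policy πa
    (hlawA : ∀ t, (μ {ω | A ω = t}).toReal = (πe t / πb t) / ∑ t', πe t' / πb t') :
    (∀ t, ((μ[|{ω | A ω = T ω}]) {ω | T ω = t}).toReal = πe t)
      ∧ ∀ B : Set ℝ, MeasurableSet B →
        ((μ[|{ω | A ω = T ω}]) {ω | Y ω ∈ B}).toReal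
          = ∑ t, πe t * (μ {ω | Ypot t ω ∈ B}).toReal := by
  classical
  have hS0 : (0:ℝ) < ∑ t', πe t' / πb t' := by
    obtain ⟨t, ht⟩ : ∃ t, 0 < πe t := by
      by_contra h
      push_neg at h
      have h0 : ∑ t, πe t = 0 :=
        Finset.sum_eq_zero fun t _ => le_antisymm (h t) (hπe0 t)
      rw [h0] at hπe1; exact zero_ne_one hπe1
    exact lt_of_lt_of_le (div_pos ht (hpos t))
      (Finset.single_le_sum (fun i _ => div_nonneg (hπe0 i) (hpos i).le) (Finset.mem_univ t))
  set S : ℝ := ∑ t', πe t' / πb t' with hSdef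
  have hSne : S ≠ 0 := hS0.ne'
  have hMA : ∀ t, MeasurableSet {ω | A ω = t} := fun t => hA (measurableSet_singleton t)
  have hMT : ∀ t, MeasurableSet {ω | T ω = t} := fun t => hT (measurableSet_singleton t)
  have hdiag : {ω | A ω = T ω} = ⋃ t, ({ω | A ω = t} ∩ {ω | T ω = t}) := by
    ext ω
    simp only [Set.mem_setOf_eq, Set.mem_iUnion, Set.mem_inter_iff]
    exact ⟨fun h => ⟨T ω, h, rfl⟩, fun ⟨t, h1, h2⟩ => h1.trans h2.symm⟩
  have hMs : MeasurableSet {ω | A ω = T ω} := by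
    rw [hdiag]; exact MeasurableSet.iUnion fun t => (hMA t).inter (hMT t)
  have hAT : ∀ t, μ ({ω | A ω = t} ∩ {ω | T ω = t}) = μ {ω | A ω = t} * μ {ω | T ω = t} := by
    intro t
    have hB : MeasurableSet {p : Fin m × (Fin m → ℝ) | p.1 = t} :=
      measurable_fst (measurableSet_singleton t)
    have h := hAindep t _ hB
    simpa using h
  have hATreal : ∀ t, (μ ({ω | A ω = t} ∩ {ω | T ω = t})).toReal = πe t / S := by
    intro t
    rw [hAT, ENNReal.toReal_mul, hlawA, hπb]
    field_simp [(hpos t).ne']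
  have hsum : ∀ (s : Fin m → Set Ω), (∀ t, MeasurableSet (s t)) →
      (∀ t, s t ⊆ {ω | A ω = t}) →
      (μ (⋃ t, s t)).toReal = ∑ t, (μ (s t)).toReal := by
    intro s hms hsub
    have hd : Pairwise (Function.onFun Disjoint s) := by
      intro i j hij
      refine Set.disjoint_left.2 fun ω hi hj => hij ?_
      exact (hsub i hi).symm.trans (hsub j hj)
    rw [measure_iUnion hd hms, tsum_fintype,
      ENNReal.toReal_sum fun t _ => measure_ne_top μ _]
  have hcreal : (μ {ω | A ω = T ω}).toReal = 1 / S := by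
    rw [hdiag, hsum _ (fun t => (hMA t).inter (hMT t)) (fun t => Set.inter_subset_left)]
    calc ∑ t, (μ ({ω | A ω = t} ∩ {ω | T ω = t})).toReal
        = ∑ t, πe t / S := Finset.sum_congr rfl fun t _ => hATreal t
      _ = 1 / S := by rw [← Finset.sum_div, hπe1]
  have hcond : ∀ u : Set Ω, ((μ[|{ω | A ω = T ω}]) u).toReal
      = S * (μ ({ω | A ω = T ω} ∩ u)).toReal := by
    intro u
    rw [ProbabilityTheory.cond_apply hMs, ENNReal.toReal_mul, ENNReal.toReal_inv, hcreal,
      one_div, inv_inv]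
  constructor
  · intro t
    have heq : {ω | A ω = T ω} ∩ {ω | T ω = t} = {ω | A ω = t} ∩ {ω | T ω = t} := by
      ext ω
      simp only [Set.mem_inter_iff, Set.mem_setOf_eq]
      constructor
      · rintro ⟨h1, h2⟩; exact ⟨h2 ▸ h1, h2⟩
      · rintro ⟨h1, h2⟩; exact ⟨h1.trans h2.symm, h2⟩
    rw [hcond, heq, hATreal]
    field_simp
  · intro B hB
    set U : Set Ω := ⋃ t, ({ω | A ω = t} ∩ {ω | T ω = t} ∩ {ω | Ypot t ω ∈ B}) with hU
    have hae : ({ω | A ω = T ω} ∩ {ω | Y ω ∈ B} : Set Ω) =ᵐ[μ] U := by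
      rw [Filter.eventuallyEq_set]
      filter_upwards [hcons] with ω hω
      simp only [Set.mem_inter_iff, Set.mem_setOf_eq, hU, Set.mem_iUnion]
      constructor
      · rintro ⟨h1, h2⟩
        exact ⟨T ω, ⟨h1, rfl⟩, hω ▸ h2⟩
      · rintro ⟨t, ⟨h1, h2⟩, h3⟩
        refine ⟨h1.trans h2.symm, ?_⟩
        rw [hω, h2]; exact h3
    have hMYB : ∀ t, MeasurableSet {ω | Ypot t ω ∈ B} := fun t => (hYpot t) hB
    have hterm : ∀ t, (μ ({ω | A ω = t} ∩ {ω | T ω = t} ∩ {ω | Ypot t ω ∈ B})).toReal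
        = πe t / S * (μ {ω | Ypot t ω ∈ B}).toReal := by
      intro t
      have h1 : μ ({ω | A ω = t} ∩ ({ω | T ω = t} ∩ {ω | Ypot t ω ∈ B}))
          = μ {ω | A ω = t} * μ ({ω | T ω = t} ∩ {ω | Ypot t ω ∈ B}) := by
        have hBset : MeasurableSet {p : Fin m × (Fin m → ℝ) | p.1 = t ∧ p.2 t ∈ B} :=
          (measurable_fst (measurableSet_singleton t)).inter
            (((measurable_pi_apply t).comp measurable_snd) hB)
        have h := hAindep t _ hBset
        simpa [Set.setOf_and] using h
      have h2 : μ ({ω | T ω = t} ∩ {ω | Ypot t ω ∈ B})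
          = μ {ω | T ω = t} * μ {ω | Ypot t ω ∈ B} := by
        have h := hTY t {f | f t ∈ B} ((measurable_pi_apply t) hB)
        simpa using h
      rw [Set.inter_assoc, h1, h2, ENNReal.toReal_mul, ENNReal.toReal_mul, hlawA, hπb]
      field_simp [(hpos t).ne']
    rw [hcond, measure_congr hae, hU,
      hsum _ (fun t => ((hMA t).inter (hMT t)).inter (hMYB t))
        (fun t => Set.inter_subset_left.trans Set.inter_subset_left)]
    rw [Finset.mul_sum]
    refine Finset.sum_congr rfl fun t _ => ?_
    rw [hterm]
    field_simp
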